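/- arXiv:1412.7017 — 5 statements merged into one kernel-verified Lean document; each statement's English description precedes it below -/
import Mathlib

section
/- Let k ≥ 1 and l ≥ 1 and let Q be a k×l integer matrix in which no row is the zero vector. Then either det(QᵀQ) = 0 or det(QᵀQ) ≥ k − l + 1. -/
open Matrix

theorem qf_aux {l : ℕ} (u x : Fin l → ℝ) :
    x ⬝ᵥ ((replicateCol Unit u * replicateRow Unit u) *ᵥ x) = (u ⬝ᵥ x)^2 := by
  simp only [dotProduct, mulVec, Matrix.mul_apply, replicateCol_apply, replicateRow_apply, Finset.sum_mul,
    Finset.mul_sum, sq, Fintype.sum_unique]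
  rw [Finset.sum_comm]
  exact Finset.sum_congr rfl fun i _ => Finset.sum_congr rfl fun j _ => by ring

theorem entry_aux {l : ℕ} (u : Fin l → ℝ) (A : Matrix (Fin l) (Fin l) ℝ) :
    (replicateRow Unit u * A * replicateCol Unit u) default default = u ⬝ᵥ (A *ᵥ u) := by
  simp only [Matrix.mul_apply, dotProduct, mulVec, replicateCol_apply, replicateRow_apply, Fintype.sum_unique,
    Finset.sum_mul, Finset.mul_sum]
  rw [Finset.sum_comm]
  exact Finset.sum_congr rfl fun i _ => Finset.sum_congr rfl fun j _ => by ring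

theorem detlem_aux {l : ℕ} (A : Matrix (Fin l) (Fin l) ℝ) (hA : IsUnit A.det) (u : Fin l → ℝ) :
    (A + replicateCol Unit u * replicateRow Unit u).det = A.det + u ⬝ᵥ ((A.det • A⁻¹) *ᵥ u) := by
  rw [det_add_replicateCol_mul_replicateRow (ι := Unit) hA]
  have h2 : (1 + replicateRow Unit u * A⁻¹ * replicateCol Unit u).det = 1 + u ⬝ᵥ (A⁻¹ *ᵥ u) := by
    rw [det_unique, Matrix.add_apply, Matrix.one_apply_eq, entry_aux]
  have h3 : u ⬝ᵥ ((A.det • A⁻¹) *ᵥ u) = A.det * (u ⬝ᵥ (A⁻¹ *ᵥ u)) := by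
    rw [smul_mulVec, dotProduct_smul, smul_eq_mul]
  rw [h2, h3]; ring

theorem adj_aux {l : ℕ} (A : Matrix (Fin l) (Fin l) ℝ) (hA : A.det ≠ 0) :
    A.adjugate = A.det • A⁻¹ := by
  rw [Matrix.inv_def, smul_smul, Ring.inverse_eq_inv, mul_inv_cancel₀ hA, one_smul]

/-- Lemma 2 of the paper.
Let `k ≥ 1`, `l ≥ 1` and let `Q` be a `k × l` integer matrix in which no row is the
zero vector. Then either `det (Qᵀ * Q) = 0` or `det (Qᵀ * Q) ≥ k - l + 1`. -/
theorem det_transpose_mul_self_eq_zero_or_ge (k l : ℕ) (hk : 1 ≤ k) (hl : 1 ≤ l)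
    (Q : Matrix (Fin k) (Fin l) ℤ) (hrows : ∀ i, Q i ≠ 0) :
    (Qᵀ * Q).det = 0 ∨ (k : ℤ) - (l : ℤ) + 1 ≤ (Qᵀ * Q).det := by
  classical
  by_cases h0 : (Qᵀ * Q).det = 0
  · exact Or.inl h0
  right
  have hkne : Nonempty (Fin k) := ⟨⟨0, hk⟩⟩
  set Rm : Matrix (Fin k) (Fin l) ℝ := Q.map (Int.cast) with hRmdef
  set MZ : Finset (Fin k) → Matrix (Fin l) (Fin l) ℤ :=
    fun S => ∑ i ∈ S, replicateCol Unit (Q i) * replicateRow Unit (Q i) with hMZdef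
  set NR : Finset (Fin k) → Matrix (Fin l) (Fin l) ℝ :=
    fun S => ∑ i ∈ S, replicateCol Unit (Rm i) * replicateRow Unit (Rm i) with hNRdef
  have hmap : ∀ S, (MZ S).map (Int.cast : ℤ → ℝ) = NR S := by
    intro S; ext a b
    simp [hMZdef, hNRdef, hRmdef, Matrix.sum_apply, Matrix.mul_apply, Matrix.map_apply]
  have hMZuniv : MZ Finset.univ = Qᵀ * Q := by
    ext a b
    simp [hMZdef, Matrix.sum_apply, Matrix.mul_apply, mul_comm]
  have hNRentry : ∀ S a b, NR S a b = ∑ i ∈ S, Rm i a * Rm i b := by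
    intro S a b; simp [hNRdef, Matrix.sum_apply, Matrix.mul_apply]
  have hdetcast : ∀ S, ((MZ S).det : ℝ) = (NR S).det := by
    intro S; rw [← hmap S]; exact RingHom.map_det (Int.castRingHom ℝ) (MZ S)
  have hqf : ∀ (S : Finset (Fin k)) (x : Fin l → ℝ),
      x ⬝ᵥ (NR S *ᵥ x) = ∑ i ∈ S, (Rm i ⬝ᵥ x)^2 := by
    intro S x
    induction S using Finset.induction_on with
    | empty => simp [hNRdef]
    | insert _ _ ha ih =>
      rw [hNRdef] at ih ⊢
      simp only [Finset.sum_insert ha, add_mulVec, dotProduct_add, qf_aux, ih]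
  -- the real Gram matrix of all rows is invertible
  have hNRuniv : NR Finset.univ = Rmᵀ * Rm := by
    ext a b
    rw [hNRentry]
    simp [Matrix.mul_apply, hRmdef, mul_comm]
  have hdetR : (Rmᵀ * Rm).det ≠ 0 := by
    rw [← hNRuniv, ← hdetcast, hMZuniv]
    exact_mod_cast h0
  -- the rows of Rm span everything
  have hspan : Submodule.span ℝ (Set.range Rm) = ⊤ := by
    apply Submodule.eq_top_of_finrank_eq
    change Module.finrank ℝ (Submodule.span ℝ (Set.range Rm.row)) = _
    rw [← Matrix.rank_eq_finrank_span_row]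
    have h1 := Matrix.rank_transpose_mul_self Rm
    have h2 : (Rmᵀ * Rm).rank = l := by
      rw [Matrix.rank_of_isUnit _ ((isUnit_iff_isUnit_det _).2 (isUnit_iff_ne_zero.2 hdetR))]
      simp
    rw [h2] at h1  -- wrong direction? h1 : (Rmᵀ*Rm).rank = Rm.rank
    rw [← h1]
    simp [Module.finrank_pi]
  -- extract a spanning subset of l rows
  obtain ⟨b, hbsub, hbspan, hbli⟩ := exists_linearIndependent ℝ (Set.range Rm)
  have hbfin : b.Finite := (Set.finite_range Rm).subset hbsub
  have hbspan' : Submodule.span ℝ b = ⊤ := by rw [hbspan, hspan]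
  haveI := hbfin.fintype
  have hcard : b.toFinset.card = l := by
    have h3 := finrank_span_set_eq_card hbli
    rw [hbspan', finrank_top] at h3
    rw [← h3]
    simp [Module.finrank_pi]
  set g : (Fin l → ℝ) → Fin k := fun v => Function.invFun Rm v with hgdef
  have hg : ∀ v ∈ b, Rm (g v) = v := fun v hv => Function.invFun_eq (hbsub hv)
  set S₀ : Finset (Fin k) := b.toFinset.image g with hS₀def
  have hS₀card : S₀.card = l := by
    rw [hS₀def, Finset.card_image_of_injOn, hcard]
    intro v hv w hw hvw
    rw [← hg v (Set.mem_toFinset.1 hv), ← hg w (Set.mem_toFinset.1 hw), hvw]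
  have hS₀mem : ∀ v ∈ b, ∃ i ∈ S₀, Rm i = v := fun v hv =>
    ⟨g v, Finset.mem_image_of_mem _ (Set.mem_toFinset.2 hv), hg v hv⟩
  -- positive definiteness of Gram matrices of supersets of S₀
  have hPD : ∀ S : Finset (Fin k), S₀ ⊆ S → ((MZ S).map (Int.cast : ℤ → ℝ)).PosDef := by
    intro S hsub
    rw [hmap]
    refine posDef_iff_dotProduct_mulVec.mpr ⟨?_, fun x hx => ?_⟩
    · ext a c
      rw [conjTranspose_apply, hNRentry, hNRentry, star_trivial]
      exact Finset.sum_congr rfl fun i _ => by ring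
    · rw [star_trivial, hqf]
      have hle := Finset.sum_le_sum_of_subset_of_nonneg hsub
        (fun i _ _ => sq_nonneg (Rm i ⬝ᵥ x))
      have h0le : 0 ≤ ∑ i ∈ S₀, (Rm i ⬝ᵥ x)^2 :=
        Finset.sum_nonneg fun i _ => sq_nonneg _
      rcases h0le.lt_or_eq with h | h
      · exact lt_of_lt_of_le h hle
      · exfalso
        have hz := (Finset.sum_eq_zero_iff_of_nonneg (fun i _ => sq_nonneg (Rm i ⬝ᵥ x))).1 h.symm
        have hdz : ∀ i ∈ S₀, Rm i ⬝ᵥ x = 0 := fun i hi => sq_eq_zero_iff.1 (hz i hi)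
        have hb0 : ∀ v ∈ b, v ⬝ᵥ x = 0 := by
          intro v hv
          obtain ⟨i, hi, he⟩ := hS₀mem v hv
          rw [← he]; exact hdz i hi
        have hmem : x ∈ Submodule.span ℝ b := by rw [hbspan']; trivial
        have hxx : x ⬝ᵥ x = 0 := by
          refine Submodule.span_induction (p := fun v _ => v ⬝ᵥ x = 0) hb0
            (zero_dotProduct x)
            (fun y z _ _ hy hz => by
              have hy' : y ⬝ᵥ x = 0 := hy
              have hz' : z ⬝ᵥ x = 0 := hz
              show (y + z) ⬝ᵥ x = 0
              rw [add_dotProduct, hy', hz', add_zero])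
            (fun a y _ hy => by
              have hy' : y ⬝ᵥ x = 0 := hy
              show (a • y) ⬝ᵥ x = 0
              rw [smul_dotProduct, hy', smul_zero]) hmem
        exact hx (dotProduct_self_eq_zero.1 hxx)
  -- base: det over supersets of S₀ is at least 1
  have hdet1 : ∀ S : Finset (Fin k), S₀ ⊆ S → 1 ≤ (MZ S).det := by
    intro S hsub
    have h1 := (hPD S hsub).det_pos
    rw [hmap, ← hdetcast] at h1
    exact_mod_cast h1
  -- step: inserting a new (nonzero) row increases det by at least 1
  have hstep : ∀ S : Finset (Fin k), S₀ ⊆ S → ∀ j ∉ S,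
      (MZ S).det + 1 ≤ (MZ (insert j S)).det := by
    intro S hsub j hj
    set A : Matrix (Fin l) (Fin l) ℝ := (MZ S).map (Int.cast : ℤ → ℝ) with hAdef
    have hA := hPD S hsub
    have hdA : A.det ≠ 0 := hA.det_pos.ne'
    have hrj : Rm j ≠ 0 := by
      intro h
      apply hrows j
      funext a
      have h2 := congrFun h a
      simp only [hRmdef, Matrix.map_apply, Pi.zero_apply] at h2
      simp only [Pi.zero_apply]
      exact_mod_cast h2
    set n : ℤ := Q j ⬝ᵥ ((MZ S).adjugate *ᵥ Q j) with hn
    have hcastn : (n : ℝ) = Rm j ⬝ᵥ (A.adjugate *ᵥ Rm j) := by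
      have hadj : A.adjugate = ((MZ S).adjugate).map (Int.cast : ℤ → ℝ) :=
        ((Int.castRingHom ℝ).map_adjugate (MZ S)).symm
      rw [hadj, hn]
      simp only [dotProduct, mulVec, Matrix.map_apply, hRmdef]
      push_cast
      rfl
    have hposn : (0:ℝ) < (n : ℝ) := by
      rw [hcastn, adj_aux A hdA, smul_mulVec, dotProduct_smul, smul_eq_mul]
      have h4 := hA.inv.dotProduct_mulVec_pos hrj
      rw [star_trivial] at h4
      exact mul_pos hA.det_pos h4
    have hn1 : 1 ≤ n := by exact_mod_cast hposn
    have hins : NR (insert j S) = A + replicateCol Unit (Rm j) * replicateRow Unit (Rm j) := by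
      rw [hAdef, hmap, hNRdef]
      simp only [Finset.sum_insert hj]
      rw [add_comm]
    have hZ : (MZ (insert j S)).det = (MZ S).det + n := by
      have hR : ((MZ (insert j S)).det : ℝ) = ((MZ S).det : ℝ) + (n : ℝ) := by
        rw [hdetcast, hdetcast, hins, detlem_aux A (isUnit_iff_ne_zero.2 hdA) (Rm j),
          hcastn, adj_aux A hdA, hAdef, hmap S]
      exact_mod_cast hR
    rw [hZ]
    omega
  -- induction over adding the remaining rows
  have main : ∀ T : Finset (Fin k),
      ((S₀ ∪ T).card : ℤ) - (l : ℤ) + 1 ≤ (MZ (S₀ ∪ T)).det := by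
    intro T
    induction T using Finset.induction_on with
    | empty =>
      rw [Finset.union_empty, hS₀card]
      have := hdet1 S₀ (Finset.Subset.refl _)
      omega
    | @insert a T ha ih =>
      rw [Finset.union_insert]
      by_cases haT : a ∈ S₀ ∪ T
      · rw [Finset.insert_eq_self.2 haT]
        exact ih
      · rw [Finset.card_insert_of_notMem haT]
        have hstep' := hstep (S₀ ∪ T) Finset.subset_union_left a haT
        push_cast
        omega
  have hfin := main Finset.univ
  have hu : S₀ ∪ (Finset.univ : Finset (Fin k)) = Finset.univ := by simp
  rw [hu, Finset.card_univ, hMZuniv] at hfin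
  simpa using hfin
end

section
/- Let s ≥ 1 and let l₁, …, l_s and k₁, …, k_s be positive integers with kᵢ > lᵢ for all i. Then ∏_{i=1}^{s} ( lᵢ(kᵢ − lᵢ) + 1 ) ≥ ( Σ_{i=1}^{s} lᵢ ) · ( Σ_{i=1}^{s} (kᵢ − lᵢ) ), unless s = 3 and (lᵢ, kᵢ) = (1, 2) for i = 1, 2, 3; in that exceptional case the left-hand side equals 8 and the right-hand side equals 9. -/
lemma myadd_le (x y : ℕ) (hx : 1 ≤ x) (hy : 1 ≤ y) : x + y ≤ x * y + 1 := by
  nlinarith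

lemma pair (a b c d : ℕ) (ha : 1 ≤ a) (hb : 1 ≤ b) (hc : 1 ≤ c) (hd : 1 ≤ d) :
    (a + c) * (b + d) ≤ (a * b + 1) * (c * d + 1) := by
  have := myadd_le (a*d) (c*b) (Nat.one_le_iff_ne_zero.2 (by positivity))
    (Nat.one_le_iff_ne_zero.2 (by positivity))
  nlinarith

lemma key (M N a b : ℕ) (hM : 2 ≤ M) (hN : 2 ≤ N) (ha : 1 ≤ a) (hb : 1 ≤ b)
    (h2 : 2 ≤ a * b ∨ 3 ≤ M ∨ 3 ≤ N) : (M + a) * (N + b) ≤ M * N * (a * b + 1) := by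
  have hab : 2 ≤ a ∨ 2 ≤ b ∨ 3 ≤ M ∨ 3 ≤ N := by
    rcases h2 with h | h | h
    · rcases Nat.lt_or_ge a 2 with h' | h'
      · right; left; interval_cases a <;> omega
      · exact Or.inl h'
    · tauto
    · tauto
  rcases hab with h | h | h | h
  · have h1 : 4 * (M*b) ≤ (a*N) * (M*b) := mul_le_mul_left (by nlinarith) _
    have h2 : 2 * (a*N) ≤ (M*b) * (a*N) := mul_le_mul_left (by nlinarith) _
    have h3 : 4 * (a*b) ≤ (M*N) * (a*b) := mul_le_mul_left (by nlinarith) _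
    nlinarith
  · have h1 : 2 * (M*b) ≤ (a*N) * (M*b) := mul_le_mul_left (by nlinarith) _
    have h2 : 4 * (a*N) ≤ (M*b) * (a*N) := mul_le_mul_left (by nlinarith) _
    have h3 : 4 * (a*b) ≤ (M*N) * (a*b) := mul_le_mul_left (by nlinarith) _
    nlinarith
  · have h1 : 2 * (M*b) ≤ (a*N) * (M*b) := mul_le_mul_left (by nlinarith) _
    have h2 : 3 * (a*N) ≤ (M*b) * (a*N) := mul_le_mul_left (by nlinarith) _
    have h3 : 6 * (a*b) ≤ (M*N) * (a*b) := mul_le_mul_left (by nlinarith) _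
    nlinarith
  · have h1 : 3 * (M*b) ≤ (a*N) * (M*b) := mul_le_mul_left (by nlinarith) _
    have h2 : 2 * (a*N) ≤ (M*b) * (a*N) := mul_le_mul_left (by nlinarith) _
    have h3 : 6 * (a*b) ≤ (M*N) * (a*b) := mul_le_mul_left (by nlinarith) _
    nlinarith

lemma aux_statement6 : ∀ s : ℕ, ∀ a b : Fin s → ℕ, (∀ i, 1 ≤ a i) → (∀ i, 1 ≤ b i) →
    (∑ i, a i) * (∑ i, b i) ≤ ∏ i, (a i * b i + 1) ∨
    (s = 3 ∧ ∀ i, a i = 1 ∧ b i = 1) := by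
  intro s
  induction s with
  | zero => intro a b _ _; left; simp
  | succ n ih =>
    intro a b ha hb
    match n, ih with
    | 0, _ =>
      left
      simp
    | 1, _ =>
      left
      rw [Fin.sum_univ_two, Fin.sum_univ_two, Fin.prod_univ_two]
      exact pair _ _ _ _ (ha 0) (hb 0) (ha 1) (hb 1)
    | 2, _ =>
      by_cases hall : ∀ i, a i = 1 ∧ b i = 1
      · exact Or.inr ⟨rfl, hall⟩
      push_neg at hall
      obtain ⟨i, hi⟩ := hall
      have h2 : 2 ≤ a i * b i := by
        rcases Classical.em (a i = 1) with h | h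
        · have hbi : 2 ≤ b i := by have := hb i; omega
          calc 2 = 1 * 2 := rfl
            _ ≤ a i * b i := Nat.mul_le_mul (ha i) hbi
        · have hai : 2 ≤ a i := by have := ha i; omega
          calc 2 = 2 * 1 := rfl
            _ ≤ a i * b i := Nat.mul_le_mul hai (hb i)
      left
      rw [Fin.sum_univ_three, Fin.sum_univ_three, Fin.prod_univ_three]
      fin_cases i
      · have P := pair (a 1) (b 1) (a 2) (b 2) (ha 1) (hb 1) (ha 2) (hb 2)
        have K := key (a 1 + a 2) (b 1 + b 2) (a 0) (b 0)
          (by have := ha 1; have := ha 2; omega) (by have := hb 1; have := hb 2; omega)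
          (ha 0) (hb 0) (Or.inl h2)
        calc (a 0 + a 1 + a 2) * (b 0 + b 1 + b 2)
            = (a 1 + a 2 + a 0) * (b 1 + b 2 + b 0) := by ring
          _ ≤ (a 1 + a 2) * (b 1 + b 2) * (a 0 * b 0 + 1) := K
          _ ≤ (a 1 * b 1 + 1) * (a 2 * b 2 + 1) * (a 0 * b 0 + 1) := mul_le_mul_left P _
          _ = (a 0 * b 0 + 1) * (a 1 * b 1 + 1) * (a 2 * b 2 + 1) := by ring
      · have P := pair (a 0) (b 0) (a 2) (b 2) (ha 0) (hb 0) (ha 2) (hb 2)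
        have K := key (a 0 + a 2) (b 0 + b 2) (a 1) (b 1)
          (by have := ha 0; have := ha 2; omega) (by have := hb 0; have := hb 2; omega)
          (ha 1) (hb 1) (Or.inl h2)
        calc (a 0 + a 1 + a 2) * (b 0 + b 1 + b 2)
            = (a 0 + a 2 + a 1) * (b 0 + b 2 + b 1) := by ring
          _ ≤ (a 0 + a 2) * (b 0 + b 2) * (a 1 * b 1 + 1) := K
          _ ≤ (a 0 * b 0 + 1) * (a 2 * b 2 + 1) * (a 1 * b 1 + 1) := mul_le_mul_left P _
          _ = (a 0 * b 0 + 1) * (a 1 * b 1 + 1) * (a 2 * b 2 + 1) := by ring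
      · have P := pair (a 0) (b 0) (a 1) (b 1) (ha 0) (hb 0) (ha 1) (hb 1)
        have K := key (a 0 + a 1) (b 0 + b 1) (a 2) (b 2)
          (by have := ha 0; have := ha 1; omega) (by have := hb 0; have := hb 1; omega)
          (ha 2) (hb 2) (Or.inl h2)
        calc (a 0 + a 1 + a 2) * (b 0 + b 1 + b 2)
            ≤ (a 0 + a 1) * (b 0 + b 1) * (a 2 * b 2 + 1) := K
          _ ≤ (a 0 * b 0 + 1) * (a 1 * b 1 + 1) * (a 2 * b 2 + 1) := mul_le_mul_left P _
    | (m+3), ih =>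
      left
      rw [Fin.sum_univ_castSucc (f := a), Fin.sum_univ_castSucc (f := b),
        Fin.prod_univ_castSucc]
      set A := fun i : Fin (m+3) => a (Fin.castSucc i) with hA
      set B := fun i : Fin (m+3) => b (Fin.castSucc i) with hB
      have haL := ha (Fin.last (m+3))
      have hbL := hb (Fin.last (m+3))
      rcases ih A B (fun i => ha _) (fun i => hb _) with hle | ⟨h3, hall⟩
      · have hM : m + 3 ≤ ∑ i, A i := by
          calc m + 3 = ∑ _i : Fin (m+3), 1 := by simp
            _ ≤ ∑ i, A i := Finset.sum_le_sum fun i _ => ha _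
        have hN : m + 3 ≤ ∑ i, B i := by
          calc m + 3 = ∑ _i : Fin (m+3), 1 := by simp
            _ ≤ ∑ i, B i := Finset.sum_le_sum fun i _ => hb _
        have K := key (∑ i, A i) (∑ i, B i) (a (Fin.last (m+3))) (b (Fin.last (m+3)))
          (by omega) (by omega) haL hbL (Or.inr (Or.inl (by omega)))
        calc (∑ i, A i + a (Fin.last (m+3))) * (∑ i, B i + b (Fin.last (m+3)))
            ≤ (∑ i, A i) * (∑ i, B i) * (a (Fin.last (m+3)) * b (Fin.last (m+3)) + 1) := K
          _ ≤ (∏ i, (A i * B i + 1)) * (a (Fin.last (m+3)) * b (Fin.last (m+3)) + 1) :=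
              mul_le_mul_left hle _
      · have hm : m = 0 := by omega
        subst hm
        have e0 := hall 0; have e1 := hall 1; have e2 := hall 2
        have hsA : ∑ i, A i = 3 := by
          rw [Fin.sum_univ_three]; omega
        have hsB : ∑ i, B i = 3 := by
          rw [Fin.sum_univ_three]; omega
        have hpr : ∏ i, (A i * B i + 1) = 8 := by
          rw [Fin.prod_univ_three, e0.1, e0.2, e1.1, e1.2, e2.1, e2.2]; norm_num
        rw [hsA, hsB, hpr]
        set x := a (Fin.last 3); set y := b (Fin.last 3)
        have h1 : x ≤ x * y := Nat.le_mul_of_pos_right _ hbL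
        have h2 : y ≤ x * y := Nat.le_mul_of_pos_left _ haL
        have h3 : 1 ≤ x * y := Nat.one_le_iff_ne_zero.2 (by positivity)
        nlinarith

/-- arithmetic inequality from the proof of Lemma 7 of the paper.
Let `s ≥ 1` and let `l₁, …, l_s`, `k₁, …, k_s` be positive integers with `kᵢ > lᵢ` for
all `i`. Then `∏ᵢ (lᵢ * (kᵢ - lᵢ) + 1) ≥ (∑ᵢ lᵢ) * (∑ᵢ (kᵢ - lᵢ))`, unless `s = 3` and
`(lᵢ, kᵢ) = (1, 2)` for all `i`; in the exceptional case the left-hand side is `8` and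
the right-hand side is `9`. -/
theorem prod_ge_sum_mul_sum_or_exceptional (s : ℕ) (hs : 1 ≤ s) (l k : Fin s → ℕ)
    (hl : ∀ i, 0 < l i) (hk : ∀ i, l i < k i) :
    (∑ i, l i) * (∑ i, (k i - l i)) ≤ ∏ i, (l i * (k i - l i) + 1) ∨
    (s = 3 ∧ (∀ i, l i = 1 ∧ k i = 2) ∧
      (∏ i, (l i * (k i - l i) + 1)) = 8 ∧ (∑ i, l i) * (∑ i, (k i - l i)) = 9) := by
  rcases aux_statement6 s l (fun i => k i - l i) hl (fun i => Nat.sub_pos_of_lt (hk i)) with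
    h | ⟨h3, hall⟩
  · exact Or.inl h
  · right
    subst h3
    have e : ∀ i : Fin 3, l i = 1 ∧ k i = 2 := fun i =>
      ⟨(hall i).1, by have := hk i; have h1 : l i = 1 := (hall i).1; have h2 : k i - l i = 1 := (hall i).2; omega⟩
    refine ⟨rfl, e, ?_, ?_⟩
    · rw [Fin.prod_univ_three, (e 0).1, (e 0).2, (e 1).1, (e 1).2, (e 2).1, (e 2).2]
      norm_num
    · rw [Fin.sum_univ_three, Fin.sum_univ_three, (e 0).1, (e 0).2, (e 1).1, (e 1).2,
        (e 2).1, (e 2).2]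
      norm_num
end

section
/- Let m ≥ 1 and l ≥ 1 be integers and let x = (x₁, …, x_l) ∈ ℤ^l be a nonzero vector with exactly α nonzero entries. Then Σ_{i=1}^{l} xᵢ² + m·Σ_{1≤i<j≤l} (xᵢ − xⱼ)² ≥ α + m·α·(l − α) ≥ l. Moreover, if Σ_{i} xᵢ² + m·Σ_{i<j} (xᵢ − xⱼ)² = l, then x = (1, …, 1) or x = −(1, …, 1), or m = 1 and x = ±eⱼ for some standard basis vector eⱼ of ℤ^l. -/
private lemma one_le_sq_int {a : ℤ} (h : a ≠ 0) : 1 ≤ a ^ 2 := by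
  nlinarith [Int.one_le_abs h, sq_abs a, abs_nonneg a]

/-- inequality with equality analysis from the proof of Proposition 5
of the paper. Let `m ≥ 1`, `l ≥ 1` and let `x ∈ ℤ^l` be nonzero with exactly `α`
nonzero entries. Then
`∑ xᵢ² + m * ∑_{i<j} (xᵢ - xⱼ)² ≥ α + m * α * (l - α) ≥ l`, and in case of equality
with `l` we have `x = ±(1, …, 1)`, or `m = 1` and `x = ±eⱼ` for some `j`. -/
theorem quadForm_ge_and_eq_case (m : ℤ) (hm : 1 ≤ m) (l : ℕ) (hl : 1 ≤ l)
    (x : Fin l → ℤ) (hx : x ≠ 0) (α : ℕ)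
    (hα : α = (Finset.univ.filter fun i => x i ≠ 0).card) :
    ((α : ℤ) + m * α * ((l : ℤ) - α)
        ≤ ∑ i, (x i) ^ 2 + m * ∑ i, ∑ j ∈ Finset.Ioi i, (x i - x j) ^ 2) ∧
    ((l : ℤ) ≤ (α : ℤ) + m * α * ((l : ℤ) - α)) ∧
    ((∑ i, (x i) ^ 2 + m * ∑ i, ∑ j ∈ Finset.Ioi i, (x i - x j) ^ 2) = (l : ℤ) →
      (∀ i, x i = 1) ∨ (∀ i, x i = -1) ∨
      (m = 1 ∧ ∃ j : Fin l, x = Pi.single j 1 ∨ x = Pi.single j (-1))) := by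
  set S : Finset (Fin l) := Finset.univ.filter fun i => x i ≠ 0 with hS
  set c : Fin l → ℤ := fun i => if x i ≠ 0 then 1 else 0 with hc
  have hα1 : 1 ≤ α := by
    obtain ⟨i, hi⟩ : ∃ i, x i ≠ 0 := by
      by_contra h; push_neg at h; exact hx (funext h)
    rw [hα]
    exact Finset.card_pos.mpr ⟨i, Finset.mem_filter.mpr ⟨Finset.mem_univ i, hi⟩⟩
  have hαl : α ≤ l := by
    rw [hα]
    simpa using Finset.card_filter_le Finset.univ fun i => x i ≠ 0
  have hsumc : ∑ i, c i = (α : ℤ) := by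
    rw [hα, hS]
    rw [show ∑ i, c i = ∑ i ∈ Finset.univ, (if x i ≠ 0 then (1:ℤ) else 0) from rfl]
    rw [Finset.sum_ite, Finset.sum_const, Finset.sum_const]
    simp
  -- pointwise bound for squares
  have hptsq : ∀ i ∈ Finset.univ, c i ≤ (x i) ^ 2 := by
    intro i _
    by_cases h : x i = 0
    · simp [hc, h]
    · simp only [hc, h, ne_eq, not_false_eq_true, if_true]
      exact one_le_sq_int h
  have hA : (α : ℤ) ≤ ∑ i, (x i) ^ 2 := by
    rw [← hsumc]; exact Finset.sum_le_sum hptsq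
  -- the pair lower bound function
  set g : Fin l → Fin l → ℤ := fun i j => c i * (1 - c j) with hg
  have hptpair : ∀ i j : Fin l, g j i + g i j ≤ (x i - x j) ^ 2 := by
    intro i j
    by_cases hi : x i = 0 <;> by_cases hj : x j = 0
    · simp [hg, hc, hi, hj]
    · simp only [hg, hc, hi, hj, ne_eq, not_true_eq_false, not_false_eq_true, if_true, if_false]
      have := one_le_sq_int hj
      nlinarith [sq_nonneg (x i - x j)]
    · simp only [hg, hc, hi, hj, ne_eq, not_true_eq_false, not_false_eq_true, if_true, if_false]
      have := one_le_sq_int hi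
      nlinarith [sq_nonneg (x i - x j)]
    · simp only [hg, hc, hi, hj, ne_eq, not_false_eq_true, if_true]
      nlinarith [sq_nonneg (x i - x j)]
  -- value of the pair sum of g
  have hQ : ∑ i, ∑ j ∈ Finset.Ioi i, (g j i + g i j) = (α : ℤ) * ((l : ℤ) - α) := by
    rw [Finset.sum_sum_Ioi_add_eq_sum_sum_off_diag g]
    have H : ∑ i, ∑ j ∈ ({i}ᶜ : Finset (Fin l)), g j i = (α : ℤ) * ((l : ℤ) - α) := ?_
    · convert H using 4
    have h1 : ∀ i : Fin l, ∑ j ∈ ({i}ᶜ : Finset (Fin l)), g j i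
        = (α : ℤ) - (α : ℤ) * c i := by
      intro i
      have h2 : ∑ j ∈ ({i}ᶜ : Finset (Fin l)), c j = (α : ℤ) - c i := by
        have := Finset.sum_compl_add_sum ({i} : Finset (Fin l)) c
        simp only [Finset.sum_singleton] at this
        rw [hsumc] at this
        linarith
      have h3 : ∑ j ∈ ({i}ᶜ : Finset (Fin l)), g j i
          = (∑ j ∈ ({i}ᶜ : Finset (Fin l)), c j) * (1 - c i) := by
        rw [Finset.sum_mul]
      rw [h3, h2]
      by_cases h : x i = 0 <;> simp [hc, h]
    calc ∑ i, ∑ j ∈ ({i}ᶜ : Finset (Fin l)), g j i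
        = ∑ i, ((α : ℤ) - (α : ℤ) * c i) := Finset.sum_congr rfl fun i _ => h1 i
      _ = (α : ℤ) * ((l : ℤ) - α) := by
          rw [Finset.sum_sub_distrib, Finset.sum_const, ← Finset.mul_sum, hsumc]
          simp only [Finset.card_univ, Fintype.card_fin, nsmul_eq_mul]
          ring
  have hB : (α : ℤ) * ((l : ℤ) - α) ≤ ∑ i, ∑ j ∈ Finset.Ioi i, (x i - x j) ^ 2 := by
    rw [← hQ]
    exact Finset.sum_le_sum fun i _ =>
      Finset.sum_le_sum fun j _ => hptpair i j
  have hα1' : (1 : ℤ) ≤ (α : ℤ) := by exact_mod_cast hα1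
  have hαl' : (α : ℤ) ≤ (l : ℤ) := by exact_mod_cast hαl
  have hmB : m * ((α : ℤ) * ((l : ℤ) - α)) ≤ m * ∑ i, ∑ j ∈ Finset.Ioi i, (x i - x j) ^ 2 :=
    mul_le_mul_of_nonneg_left hB (by linarith)
  have hr : m * ((α : ℤ) * ((l : ℤ) - α)) = m * α * ((l : ℤ) - α) := by ring
  have hmain : (α : ℤ) + m * α * ((l : ℤ) - α)
      ≤ ∑ i, (x i) ^ 2 + m * ∑ i, ∑ j ∈ Finset.Ioi i, (x i - x j) ^ 2 := by
    linarith
  have hsecond : (l : ℤ) ≤ (α : ℤ) + m * α * ((l : ℤ) - α) := by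
    have p1 : (0:ℤ) ≤ ((α:ℤ) - 1) * ((l:ℤ) - α) :=
      mul_nonneg (by linarith) (by linarith)
    have p2 : (0:ℤ) ≤ (m - 1) * ((α:ℤ) * ((l:ℤ) - α)) :=
      mul_nonneg (by linarith) (mul_nonneg (by linarith) (by linarith))
    have key : (α : ℤ) + m * α * ((l : ℤ) - α) - l
        = ((α:ℤ) - 1) * ((l:ℤ) - α) + (m - 1) * ((α:ℤ) * ((l:ℤ) - α)) := by ring
    linarith
  refine ⟨hmain, hsecond, fun hE => ?_⟩
  -- equality case
  have e0 : (α : ℤ) + m * α * ((l : ℤ) - α) = l := le_antisymm (hE ▸ hmain) hsecond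
  have eqx : ∑ i, (x i) ^ 2 = (α : ℤ) := by linarith
  have eqP : ∑ i, ∑ j ∈ Finset.Ioi i, (x i - x j) ^ 2 = (α : ℤ) * ((l : ℤ) - α) := by
    have h1 : m * ((α : ℤ) * ((l : ℤ) - α))
        = m * ∑ i, ∑ j ∈ Finset.Ioi i, (x i - x j) ^ 2 := by linarith
    exact (mul_left_cancel₀ (by linarith : m ≠ 0) h1).symm
  -- each nonzero entry is ±1
  have hone : ∀ i, x i ≠ 0 → x i = 1 ∨ x i = -1 := by
    intro i hi
    have hsq : ∀ i ∈ Finset.univ, (c i : ℤ) = (x i) ^ 2 := by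
      apply (Finset.sum_eq_sum_iff_of_le hptsq).mp
      rw [hsumc, eqx]
    have h1 : (x i) ^ 2 = 1 := by
      have h2 := (hsq i (Finset.mem_univ i)).symm
      simp only [hc, hi, ne_eq, not_false_eq_true, if_true] at h2
      exact h2
    have : IsUnit (x i) := IsUnit.of_mul_eq_one (x i) (by rw [← h1]; ring)
    exact Int.isUnit_iff.mp this
  -- pairwise equality: nonzero entries are all equal
  have hpair : ∀ i, ∀ j ∈ Finset.Ioi i, g j i + g i j = (x i - x j) ^ 2 := by
    have houter := (Finset.sum_eq_sum_iff_of_le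
      (fun i (_ : i ∈ Finset.univ) => Finset.sum_le_sum
        (fun j (_ : j ∈ Finset.Ioi i) => hptpair i j))).mp (by rw [hQ, eqP])
    intro i j hj
    exact (Finset.sum_eq_sum_iff_of_le fun j _ => hptpair i j).mp
      (houter i (Finset.mem_univ i)) j hj
  have hequal : ∀ i j : Fin l, x i ≠ 0 → x j ≠ 0 → x i = x j := by
    have key : ∀ i j : Fin l, i < j → x i ≠ 0 → x j ≠ 0 → x i = x j := by
      intro i j hij hi hj
      have h5 := hpair i j (Finset.mem_Ioi.mpr hij)
      simp only [hg, hc, hi, hj, ne_eq, not_false_eq_true, if_true] at h5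
      have h0 : (x i - x j) ^ 2 = 0 := by linarith
      have h6 := pow_eq_zero_iff (n := 2) (by norm_num) |>.mp h0
      linarith
    intro i j hi hj
    rcases lt_trichotomy i j with h | h | h
    · exact key i j h hi hj
    · rw [h]
    · exact (key j i h hj hi).symm
  by_cases hcase : α = l
  · -- all entries nonzero
    have hallne : ∀ i : Fin l, x i ≠ 0 := by
      have hsub : S ⊆ Finset.univ := Finset.subset_univ S
      have hcard : (Finset.univ : Finset (Fin l)).card ≤ S.card := by
        rw [← hα, hcase, Finset.card_univ, Fintype.card_fin]
      have heq := Finset.eq_of_subset_of_card_le hsub hcard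
      intro i
      have hi : i ∈ S := heq ▸ Finset.mem_univ i
      exact (Finset.mem_filter.mp hi).2
    have i0 : Fin l := ⟨0, hl⟩
    rcases hone i0 (hallne i0) with h1 | h1
    · left; intro i; rw [hequal i i0 (hallne i) (hallne i0), h1]
    · right; left; intro i; rw [hequal i i0 (hallne i) (hallne i0), h1]
  · -- α < l, so α = 1 and m = 1
    have hαltl : α < l := lt_of_le_of_ne hαl hcase
    have hαltl' : (α : ℤ) < (l : ℤ) := by exact_mod_cast hαltl
    have hma : m * (α : ℤ) = 1 := by
      have h1 : (m * (α : ℤ) - 1) * ((l : ℤ) - α) = 0 := by linear_combination e0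
      rcases mul_eq_zero.mp h1 with h | h
      · linarith
      · exfalso; linarith
    have p : (0:ℤ) ≤ (m - 1) * ((α:ℤ) - 1) := mul_nonneg (by linarith) (by linarith)
    have pe : (m - 1) * ((α:ℤ) - 1) = m * α - m - α + 1 := by ring
    have hm1 : m = 1 := by linarith
    have hα1eq : α = 1 := by
      have : (α : ℤ) = 1 := by linarith
      exact_mod_cast this
    obtain ⟨j, hj⟩ := Finset.card_eq_one.mp (by rw [← hα, hα1eq])
    have hxj : x j ≠ 0 := by
      have hjS : j ∈ S := hj ▸ Finset.mem_singleton_self j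
      exact (Finset.mem_filter.mp hjS).2
    have hzero : ∀ i : Fin l, i ≠ j → x i = 0 := by
      intro i hij
      by_contra h
      have hiS : i ∈ S := Finset.mem_filter.mpr ⟨Finset.mem_univ i, h⟩
      rw [hj, Finset.mem_singleton] at hiS
      exact hij hiS
    right; right
    refine ⟨hm1, j, ?_⟩
    rcases hone j hxj with h1 | h1
    · left; funext i
      by_cases hij : i = j
      · subst hij; simp [h1]
      · simp [Pi.single_eq_of_ne hij, hzero i hij]
    · right; funext i
      by_cases hij : i = j
      · subst hij; simp [h1]
      · simp [Pi.single_eq_of_ne hij, hzero i hij]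
end

section
/- Let k ≥ 2 and l ≥ 2 and let Q ∈ ℤ^{k×l}. If some column of Q has exactly one nonzero entry, and that entry equals 1 or −1, then Q is decomposable. -/
open Matrix

/-- A matrix `Q ∈ ℤ^{k×l}` is *decomposable* if there are `S ∈ GL(l,ℤ)`, a row
permutation `σ` (i.e. a `k × k` permutation matrix `P`) and integers `0 < k' < k`,
`0 < l' < l` such that `P * Q * S` has block diagonal shape
`[[M₁, 0], [0, M₂]]` with `M₁ ∈ ℤ^{k'×l'}` and `M₂ ∈ ℤ^{(k-k')×(l-l')}`. -/
def Matrix.Decomposable {k l : ℕ} (Q : Matrix (Fin k) (Fin l) ℤ) : Prop :=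
  ∃ (S : Matrix (Fin l) (Fin l) ℤ) (σ : Equiv.Perm (Fin k)) (k' l' : ℕ),
    IsUnit S.det ∧ 0 < k' ∧ k' < k ∧ 0 < l' ∧ l' < l ∧
    ∀ (i : Fin k) (j : Fin l),
      (((i : ℕ) < k' ∧ l' ≤ (j : ℕ)) ∨ (k' ≤ (i : ℕ) ∧ (j : ℕ) < l')) →
        (Q.submatrix σ id * S) i j = 0

/-- fact used in Lemmas 4 and 7 of the paper.
Let `k ≥ 2`, `l ≥ 2` and `Q ∈ ℤ^{k×l}`. If some column of `Q` has exactly one nonzero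
entry and that entry is `1` or `-1`, then `Q` is decomposable. -/
theorem decomposable_of_single_unit_column (k l : ℕ) (hk : 2 ≤ k) (hl : 2 ≤ l)
    (Q : Matrix (Fin k) (Fin l) ℤ)
    (h : ∃ (j : Fin l) (i₀ : Fin k),
      (Q i₀ j = 1 ∨ Q i₀ j = -1) ∧ ∀ i, i ≠ i₀ → Q i j = 0) :
    Q.Decomposable := by
  obtain ⟨j, i₀, hc, hz⟩ := h
  haveI : NeZero k := ⟨by omega⟩
  haveI : NeZero l := ⟨by omega⟩
  set c := Q i₀ j with hcdef
  have hc2 : c * c = 1 := by rcases hc with h1 | h1 <;> rw [h1] <;> ring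
  set τ : Equiv.Perm (Fin l) := Equiv.swap 0 j with hτ
  set σ : Equiv.Perm (Fin k) := Equiv.swap 0 i₀ with hσ
  set V : Matrix (Fin l) (Fin l) ℤ :=
    Matrix.of (fun a b => if a = 0 ∧ b ≠ 0 then -(c * Q i₀ (τ b)) else 0) with hV
  set U : Matrix (Fin l) (Fin l) ℤ := 1 + V with hU
  refine ⟨τ.toPEquiv.toMatrix * U, σ, 1, 1, ?_, one_pos, by omega, one_pos, by omega, ?_⟩
  · rw [Matrix.det_mul]
    apply IsUnit.mul
    · rw [Matrix.det_permutation]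
      exact (Equiv.Perm.sign τ).isUnit
    · have hdet : U.det = 1 := by
        have : U.det = ∏ i, U i i := by
          apply Matrix.det_of_upperTriangular
          intro a b hab
          simp only [hU, hV, Matrix.add_apply, Matrix.one_apply, Matrix.of_apply]
          have hab' : a ≠ b := fun h => by subst h; exact lt_irrefl _ hab
          have ha0 : ¬ (a = 0 ∧ b ≠ 0) := by
            rintro ⟨rfl, -⟩
            exact absurd hab (by simp [Fin.not_lt, Fin.zero_le])
          simp [hab', ha0]
        rw [this]
        have : ∀ i, U i i = 1 := by
          intro i
          simp [hU, hV, Matrix.add_apply, Matrix.one_apply]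
        simp [this]
      rw [hdet]; exact isUnit_one
  · intro i b hcond
    rw [← Matrix.mul_assoc, PEquiv.mul_toMatrix_toPEquiv, Matrix.submatrix_submatrix,
      Function.comp_id, Function.id_comp]
    have hτs : τ.symm = τ := by rw [hτ, Equiv.symm_swap]
    have key : (Q.submatrix ⇑σ ⇑τ.symm * U) i b
        = Q (σ i) (τ b) + Q (σ i) j * V 0 b := by
      rw [hU, Matrix.mul_add, Matrix.mul_one, Matrix.add_apply]
      have h1 : Q.submatrix ⇑σ ⇑τ.symm i b = Q (σ i) (τ b) := by
        simp [Matrix.submatrix_apply, hτs]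
      have h2 : (Q.submatrix ⇑σ ⇑τ.symm * V) i b = Q (σ i) j * V 0 b := by
        rw [Matrix.mul_apply, Finset.sum_eq_single 0]
        · simp [Matrix.submatrix_apply, hτs, hτ, Equiv.swap_apply_left]
        · intro a _ ha
          have hv : V a b = 0 := by simp [hV, ha]
          rw [hv, mul_zero]
        · simp
      rw [h1, h2]
    rw [key]
    rcases hcond with ⟨hi, hb⟩ | ⟨hi, hb⟩
    · -- i = 0, b ≠ 0
      have hi0 : i = 0 := by
        apply Fin.ext; rw [Fin.val_zero]; omega
      have hb0 : b ≠ 0 := by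
        intro hb0; rw [hb0] at hb; simp at hb
      have hσ0 : σ i = i₀ := by rw [hi0, hσ]; exact Equiv.swap_apply_left 0 i₀
      rw [hσ0]
      have hVb : V 0 b = -(c * Q i₀ (τ b)) := by simp [hV, hb0]
      rw [hVb, ← hcdef]
      linear_combination (-(Q i₀ (τ b))) * hc2
    · -- b = 0, i ≠ 0
      have hb0 : b = 0 := by apply Fin.ext; rw [Fin.val_zero]; omega
      have hi0 : i ≠ 0 := by
        intro h0; rw [h0] at hi; simp at hi
      have hσi : σ i ≠ i₀ := by
        rw [hσ]
        intro hσi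
        have := (Equiv.swap 0 i₀).injective (hσi.trans (Equiv.swap_apply_left 0 i₀).symm)
        exact hi0 this
      have hτ0 : τ b = j := by rw [hb0, hτ]; exact Equiv.swap_apply_left 0 j
      have hV0 : V 0 b = 0 := by simp [hV, hb0]
      rw [hτ0, hV0, hz (σ i) hσi]
      ring
end

section
/- Let Q ∈ ℤ^{k×l} with k > l be an indecomposable matrix of rank l without vanishing rows, all of whose elementary divisors (the invariant factors in the Smith normal form) equal 1. Then for every i with 1 ≤ i ≤ k, the (k−1)×l matrix obtained from Q by deleting the i-th row still has rank l. -/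
open Matrix

/-- key step in the induction of the proof of Lemma 4 of the paper.
Let `Q ∈ ℤ^{k×l}` with `k > l` (here `k = n + 1`) be an indecomposable matrix of rank
`l` without vanishing rows all of whose elementary divisors equal `1` (equivalently,
its Smith normal form is the identity on top of a zero block, expressed via unimodular
`U`, `V` with `U * Q * V = [[I_l], [0]]`). Then for every `i`, the `(k-1) × l` matrix
obtained from `Q` by deleting the `i`-th row still has rank `l`. -/
theorem rank_deleteRow_eq_of_indecomposable (n l : ℕ) (hkl : l < n + 1)
    (Q : Matrix (Fin (n + 1)) (Fin l) ℤ)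
    (hind : ¬ Q.Decomposable) (hrank : Q.rank = l) (hrows : ∀ i, Q i ≠ 0)
    (hsnf : ∃ (U : Matrix (Fin (n + 1)) (Fin (n + 1)) ℤ) (V : Matrix (Fin l) (Fin l) ℤ),
      IsUnit U.det ∧ IsUnit V.det ∧
      ∀ (i : Fin (n + 1)) (j : Fin l),
        (U * Q * V) i j = if (i : ℕ) = (j : ℕ) then 1 else 0) :
    ∀ i : Fin (n + 1), (Q.submatrix i.succAbove id).rank = l := by
  intro i
  -- dispose of l = 0
  rcases Nat.eq_zero_or_pos l with hl0 | hlpos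
  · exact absurd (funext fun j => absurd j.isLt (by omega)) (hrows 0)
  obtain ⟨U, V, hU, hV, hUQV⟩ := hsnf
  haveI := U.invertibleOfIsUnitDet hU
  haveI := V.invertibleOfIsUnitDet hV
  set E : Matrix (Fin (n + 1)) (Fin l) ℤ :=
    Matrix.of (fun r j => if (r : ℕ) = (j : ℕ) then 1 else 0) with hEdef
  have hE : U * Q * V = E := by
    ext r j; exact hUQV r j
  -- evaluation of E.mulVec
  have hEmul : ∀ (y : Fin l → ℤ) (r : Fin (n + 1)),
      E.mulVec y r = if h : (r : ℕ) < l then y ⟨(r : ℕ), h⟩ else 0 := by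
    intro y r
    simp only [Matrix.mulVec, dotProduct]
    split
    · rename_i h
      rw [Finset.sum_eq_single (⟨(r : ℕ), h⟩ : Fin l)]
      · simp [hEdef]
      · intro m _ hm
        have : ¬ ((r : ℕ) = (m : ℕ)) := fun hrm => hm (by ext; simp [← hrm])
        simp [hEdef, this]
      · simp
    · rename_i h
      apply Finset.sum_eq_zero
      intro m _
      have : ¬ ((r : ℕ) = (m : ℕ)) := by omega
      simp [hEdef, this]
  -- Q * V = U⁻¹ * E
  have hQV : Q * V = U⁻¹ * E := by
    rw [← hE]
    rw [Matrix.mul_assoc, Matrix.inv_mul_cancel_left_of_invertible]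
  -- kernel triviality
  have hker : ∀ x : Fin l → ℤ, Q.mulVec x = 0 → x = 0 := by
    intro x hx
    set y : Fin l → ℤ := V⁻¹.mulVec x with hy
    have hVy : V.mulVec y = x := by
      rw [hy, Matrix.mulVec_mulVec, Matrix.mul_nonsing_inv V (isUnit_det_of_invertible V),
        Matrix.one_mulVec]
    have hEy : E.mulVec y = 0 := by
      rw [← hE]
      show (U * Q * V).mulVec y = 0
      rw [Matrix.mul_assoc, ← Matrix.mulVec_mulVec, ← Matrix.mulVec_mulVec, hVy, hx,
        Matrix.mulVec_zero]
    have hy0 : y = 0 := by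
      funext j
      have := congrFun hEy (Fin.castLE (le_of_lt hkl) j)
      rw [hEmul] at this
      simpa using this
    rw [← hVy, hy0, Matrix.mulVec_zero]
  -- the deleted-row matrix
  set A : Matrix (Fin n) (Fin l) ℤ := Q.submatrix i.succAbove id with hA
  have hle : A.rank ≤ l := A.rank_le_width
  by_contra hne
  have hlt : A.rank < l := lt_of_le_of_ne hle hne
  -- extract a nonzero kernel vector of A
  have hninj : ¬ Function.Injective A.mulVecLin := by
    intro hinjA
    rw [Matrix.rank, LinearMap.finrank_range_of_inj hinjA, Module.finrank_fin_fun] at hlt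
    omega
  obtain ⟨v, hv0, hvne⟩ : ∃ v : Fin l → ℤ, A.mulVec v = 0 ∧ v ≠ 0 := by
    rw [injective_iff_map_eq_zero] at hninj
    push_neg at hninj
    obtain ⟨v, h1, h2⟩ := hninj
    exact ⟨v, h1, h2⟩
  have hvrow : ∀ r : Fin (n + 1), r ≠ i → Q.mulVec v r = 0 := by
    intro r hr
    obtain ⟨t, rfl⟩ := Fin.exists_succAbove_eq hr
    exact congrFun hv0 t
  set c : ℤ := Q.mulVec v i with hc
  have hcne : c ≠ 0 := by
    intro h0
    apply hvne
    apply hker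
    funext r
    by_cases hr : r = i
    · subst hr; exact h0
    · exact hvrow r hr
  -- the special case l = 1
  rcases lt_or_ge l 2 with hl1 | hl2
  · have hl : l = 1 := by omega
    have hn1 : 0 < n := by omega
    set r : Fin (n + 1) := i.succAbove ⟨0, hn1⟩ with hr
    have hrne : r ≠ i := Fin.succAbove_ne i _
    apply hrows r
    funext m
    have hm0 : (m : ℕ) = 0 := by omega
    have h := hvrow r hrne
    have hvm : v m ≠ 0 := by
      intro hvm
      apply hvne
      funext m'
      have : m' = m := by ext; omega
      rw [this, hvm]; rfl
    have hexp : Q.mulVec v r = Q r m * v m := by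
      simp only [Matrix.mulVec, dotProduct]
      rw [Finset.sum_eq_single m]
      · intro b _ hb; exact absurd (by ext; omega) hb
      · simp
    rw [hexp] at h
    have := mul_eq_zero.mp h
    tauto
  -- rows ≥ l of U at column i vanish
  have hUr : ∀ r : Fin (n + 1), l ≤ (r : ℕ) → U r i = 0 := by
    intro r hrl
    set y' : Fin l → ℤ := V⁻¹.mulVec v with hy'
    have hVy' : V.mulVec y' = v := by
      rw [hy', Matrix.mulVec_mulVec, Matrix.mul_nonsing_inv V (isUnit_det_of_invertible V),
        Matrix.one_mulVec]
    have h1 : U.mulVec (Q.mulVec v) = E.mulVec y' := by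
      conv_lhs => rw [← hVy']
      simp only [Matrix.mulVec_mulVec]
      rw [← Matrix.mul_assoc, hE]
    have h2 : U.mulVec (Q.mulVec v) r = U r i * c := by
      have hdot : U.mulVec (Q.mulVec v) r = ∑ b, U r b * (Q.mulVec v) b := rfl
      rw [hdot, Finset.sum_eq_single i]
      · intro b _ hb
        rw [hvrow b hb, mul_zero]
      · simp
    have h3 : E.mulVec y' r = 0 := by
      rw [hEmul]
      have : ¬ ((r : ℕ) < l) := by omega
      simp [this]
    rw [h1, h3] at h2
    exact (mul_eq_zero.mp h2.symm).resolve_right hcne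
  -- construct w with Q *ᵥ w = δ_i
  set δ : Fin (n + 1) → ℤ := fun r => if r = i then 1 else 0 with hδ
  set u : Fin l → ℤ := fun j => U (Fin.castLE (le_of_lt hkl) j) i with hu
  set w : Fin l → ℤ := V.mulVec u with hwdef
  have hUδ : U.mulVec δ = fun r => U r i := by
    funext r
    simp only [Matrix.mulVec, dotProduct, hδ]
    rw [Finset.sum_eq_single i] <;> simp +contextual
  have hEu : E.mulVec u = U.mulVec δ := by
    funext r
    rw [hEmul, hUδ]
    split
    · rename_i h
      rfl
    · rename_i h
      exact (hUr r (by omega)).symm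
  have hw : Q.mulVec w = δ := by
    rw [hwdef, Matrix.mulVec_mulVec, hQV, ← Matrix.mulVec_mulVec, hEu,
      Matrix.mulVec_mulVec, Matrix.nonsing_inv_mul U (isUnit_det_of_invertible U),
      Matrix.one_mulVec]
  -- the functional given by row i of Q
  set φ : (Fin l → ℤ) →ₗ[ℤ] ℤ := (LinearMap.proj i).comp Q.mulVecLin with hφ
  have hφapp : ∀ x : Fin l → ℤ, φ x = Q.mulVec x i := fun x => rfl
  have hφw : φ w = 1 := by
    rw [hφapp, hw, hδ]
    simp
  set K : Submodule ℤ (Fin l → ℤ) := LinearMap.ker φ with hK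
  -- splitting ℤ^l ≃ K × ℤ
  have hmem : ∀ x : Fin l → ℤ, x - φ x • w ∈ K := by
    intro x
    rw [hK, LinearMap.mem_ker, map_sub, _root_.map_smul, hφw, smul_eq_mul, mul_one, sub_self]
  set f : (K × ℤ) →ₗ[ℤ] (Fin l → ℤ) :=
    LinearMap.coprod K.subtype (LinearMap.toSpanSingleton ℤ (Fin l → ℤ) w) with hf
  set g : (Fin l → ℤ) →ₗ[ℤ] (K × ℤ) :=
    LinearMap.prod
      ((LinearMap.id - (LinearMap.toSpanSingleton ℤ (Fin l → ℤ) w).comp φ).codRestrict K hmem)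
      φ with hg
  have hfapp : ∀ p : K × ℤ, f p = (p.1 : Fin l → ℤ) + p.2 • w := fun p => rfl
  have h1 : f.comp g = LinearMap.id := by
    apply LinearMap.ext
    intro x
    show (x - φ x • w) + φ x • w = x
    rw [sub_add_cancel]
  have h2 : g.comp f = LinearMap.id := by
    apply LinearMap.ext
    rintro ⟨⟨y, hy⟩, t⟩
    have hφy : φ y = 0 := hy
    have hφyt : φ (y + t • w) = t := by
      rw [map_add, _root_.map_smul, hφy, hφw, smul_eq_mul, mul_one, zero_add]
    refine Prod.ext ?_ ?_
    · apply Subtype.ext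
      show (y + t • w) - φ (y + t • w) • w = y
      rw [hφyt, add_sub_cancel_right]
    · exact hφyt
  set e : (K × ℤ) ≃ₗ[ℤ] (Fin l → ℤ) := LinearEquiv.ofLinear f g h1 h2 with he
  have hew : ∀ p : K × ℤ, (e p : Fin l → ℤ) = (p.1 : Fin l → ℤ) + p.2 • w := by
    intro p
    rw [he, LinearEquiv.ofLinear_apply, hfapp]
  -- basis of the kernel
  obtain ⟨d, kb⟩ := Submodule.basisOfPid (Pi.basisFun ℤ (Fin l)) K
  set b₀ : Module.Basis (Fin d ⊕ Fin 1) ℤ (Fin l → ℤ) :=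
    (kb.prod (Module.Basis.singleton (Fin 1) ℤ)).map e with hb₀
  have hd : d + 1 = l := by
    have h1 := Module.finrank_eq_card_basis b₀
    rw [Module.finrank_fin_fun] at h1
    simp only [Fintype.card_sum, Fintype.card_fin] at h1
    omega
  set ε : (Fin d ⊕ Fin 1) ≃ Fin l := finSumFinEquiv.trans (finCongr hd) with hε
  set b : Module.Basis (Fin l) ℤ (Fin l → ℤ) := b₀.reindex ε with hb
  have hbinl : ∀ t : Fin d, b (ε (Sum.inl t)) = (kb t : Fin l → ℤ) := by
    intro t
    rw [hb, Module.Basis.reindex_apply, Equiv.symm_apply_apply, hb₀, Module.Basis.map_apply]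
    have : (kb.prod (Module.Basis.singleton (Fin 1) ℤ)) (Sum.inl t) = ((kb t : K), (0 : ℤ)) := by
      refine Prod.ext ?_ ?_
      · exact Module.Basis.prod_apply_inl_fst _ _ _
      · exact Module.Basis.prod_apply_inl_snd _ _ _
    rw [this, hew]
    simp
  have hbinr : ∀ t : Fin 1, b (ε (Sum.inr t)) = w := by
    intro t
    rw [hb, Module.Basis.reindex_apply, Equiv.symm_apply_apply, hb₀, Module.Basis.map_apply]
    have : (kb.prod (Module.Basis.singleton (Fin 1) ℤ)) (Sum.inr t) = ((0 : K), (1 : ℤ)) := by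
      refine Prod.ext ?_ ?_
      · exact Module.Basis.prod_apply_inr_fst _ _ _
      · rw [Module.Basis.prod_apply_inr_snd, Module.Basis.singleton_apply]
    rw [this, hew]
    simp
  have hεval : ∀ s : Fin d ⊕ Fin 1, ((ε s : Fin l) : ℕ) < d ↔ Sum.isLeft s := by
    intro s
    cases s with
    | inl t =>
      simp only [hε, Equiv.trans_apply, finCongr_apply, finSumFinEquiv_apply_left]
      simp [Fin.castAdd, Fin.castLE, t.isLt]
    | inr t =>
      simp only [hε, Equiv.trans_apply, finCongr_apply, finSumFinEquiv_apply_right]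
      have : (t : ℕ) = 0 := by omega
      simp [Fin.natAdd, this]
  -- the unimodular matrix S
  set S : Matrix (Fin l) (Fin l) ℤ := (Pi.basisFun ℤ (Fin l)).toMatrix b with hS
  have hSentry : ∀ (m j : Fin l), S m j = b j m := by
    intro m j
    rw [hS, Module.Basis.toMatrix_apply, Pi.basisFun_repr]
  haveI : Invertible S := (Pi.basisFun ℤ (Fin l)).invertibleToMatrix b
  have hSdet : IsUnit S.det := Matrix.isUnit_det_of_invertible S
  -- the permutation putting row i last
  set σ : Equiv.Perm (Fin (n + 1)) := Equiv.swap (Fin.last n) i with hσ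
  have hentry : ∀ (i' : Fin (n + 1)) (j : Fin l),
      (Q.submatrix σ id * S) i' j = Q.mulVec (b j) (σ i') := by
    intro i' j
    simp only [Matrix.mul_apply, Matrix.submatrix_apply, id_eq, Matrix.mulVec, dotProduct]
    exact Finset.sum_congr rfl fun m _ => by rw [hSentry]
  -- the contradiction
  apply hind
  refine ⟨S, σ, n, l - 1, hSdet, by omega, by omega, by omega, by omega, ?_⟩
  rintro i' j (⟨hi', hj⟩ | ⟨hi', hj⟩)
  · -- j is the w-column, i' is not the row i
    obtain ⟨s, rfl⟩ := ε.surjective j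
    have hjd : ¬ ((ε s : ℕ) < d) := by omega
    rw [hεval] at hjd
    obtain ⟨t, rfl⟩ : ∃ t, s = Sum.inr t := by
      cases s with
      | inl t => simp at hjd
      | inr t => exact ⟨t, rfl⟩
    rw [hentry, hbinr, hw, hδ]
    have : σ i' ≠ i := by
      intro hcon
      have : i' = Fin.last n := by
        have := σ.injective (hcon.trans (Equiv.swap_apply_left (Fin.last n) i).symm)
        exact this
      rw [this] at hi'
      simp at hi'
    simp [this]
  · -- i' is the last row (row i), j is a kernel column
    have hi'last : i' = Fin.last n := by
      ext
      have := i'.isLt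
      simp only [Fin.val_last]
      omega
    have hσi' : σ i' = i := by
      rw [hi'last, hσ, Equiv.swap_apply_left]
    obtain ⟨s, rfl⟩ := ε.surjective j
    have hjd : ((ε s : ℕ) < d) := by omega
    rw [hεval] at hjd
    obtain ⟨t, rfl⟩ : ∃ t, s = Sum.inl t := by
      cases s with
      | inl t => exact ⟨t, rfl⟩
      | inr t => simp at hjd
    rw [hentry, hσi', hbinl]
    have hkt : (kb t : Fin l → ℤ) ∈ K := (kb t).2
    have : φ (kb t : Fin l → ℤ) = 0 := hkt
    rw [← hφapp]
    exact this
end
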